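/- arXiv:2410.06490 — 3 statements merged into one kernel-verified Lean document; each statement's English description precedes it below -/
import Mathlib

section
/- Let d, M, E be positive integers, L₁, η_c, η_s, R, R' > 0, σ ≥ 0, and let L : ℝ^d × ℝ^M → ℝ satisfy: (i) for the fixed guiding vector G ∈ ℝ^M, the map θ ↦ L(θ, G) is differentiable with L₁-Lipschitz gradient, and (ii) for every θ ∈ ℝ^d the map G' ↦ L(θ, G') is 1-Lipschitz with respect to the Euclidean norm on ℝ^M. On a probability space, let θ⁰ ∈ ℝ^d be fixed and define local SGD iterates θ^{e+1} = θ^e − η_c ω^e for e = 0, …, E−1, where each ω^e satisfies E[ω^e ∣ θ⁰, …, θ^e] = ∇_θ L(θ^e, G) and E[‖ω^e − ∇_θ L(θ^e, G)‖₂² ∣ θ⁰, …, θ^e] ≤ σ². Let π be a random vector in ℝ^M with E[‖π‖₂] ≤ 2 η_c² R' E R. Then E[L(θ^E, G − η_s π)] ≤ L(θ⁰, G) + (L₁η_c²/2 − η_c) · Σ_{e=0}^{E−1} E[‖∇_θ L(θ^e, G)‖₂²] + L₁ E η_c² σ² / 2 + 2 η_c² η_s R' E R. -/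
open MeasureTheory

set_option maxHeartbeats 1000000

lemma abs_coord_le_norm' {n : ℕ} (x : EuclideanSpace ℝ (Fin n)) (i : Fin n) : |x i| ≤ ‖x‖ := by
  have h := abs_real_inner_le_norm (EuclideanSpace.single i (1:ℝ)) x
  simpa [EuclideanSpace.inner_single_left, EuclideanSpace.norm_single] using h

lemma smooth_taylor_bound' {n : ℕ} (f : EuclideanSpace ℝ (Fin n) → ℝ) (L₁ : ℝ) (hL : 0 ≤ L₁)
    (hdiff : Differentiable ℝ f)
    (hlip : ∀ x y, ‖gradient f x - gradient f y‖ ≤ L₁ * ‖x - y‖)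
    (x y : EuclideanSpace ℝ (Fin n)) :
    |f y - f x - (inner ℝ (gradient f x) (y - x) : ℝ)| ≤ L₁ / 2 * ‖y - x‖ ^ 2 := by
  set v := y - x with hv
  have hgc : Continuous (gradient f) := by
    have hlw : LipschitzWith (Real.toNNReal L₁) (gradient f) := by
      apply LipschitzWith.of_dist_le_mul
      intro a b
      rw [dist_eq_norm, dist_eq_norm]
      simpa [Real.coe_toNNReal L₁ hL] using hlip a b
    exact hlw.continuous
  have hderiv : ∀ t : ℝ, HasDerivAt (fun s : ℝ => f (x + s • v))
      ((inner ℝ (gradient f (x + t • v)) v : ℝ)) t := by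
    intro t
    have h1 : HasDerivAt (fun s : ℝ => x + s • v) v t := by
      simpa using ((hasDerivAt_id t).smul_const v).const_add x
    have h2 : HasFDerivAt f (InnerProductSpace.toDual ℝ _ (gradient f (x + t • v))) (x + t • v) :=
      (hdiff _).hasGradientAt.hasFDerivAt
    have h3 := h2.comp_hasDerivAt t h1
    simpa [InnerProductSpace.toDual_apply_apply, Function.comp_def] using h3
  have hcont : Continuous fun t : ℝ => (inner ℝ (gradient f (x + t • v)) v : ℝ) := by
    exact (hgc.comp (continuous_const.add (continuous_id.smul continuous_const))).inner
      continuous_const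
  have hint : ∫ t in (0:ℝ)..1, (inner ℝ (gradient f (x + t • v)) v : ℝ) =
      f (x + (1:ℝ) • v) - f (x + (0:ℝ) • v) :=
    intervalIntegral.integral_eq_sub_of_hasDerivAt (fun t _ => hderiv t)
      (hcont.intervalIntegrable 0 1)
  have h0 : f y - f x = ∫ t in (0:ℝ)..1, (inner ℝ (gradient f (x + t • v)) v : ℝ) := by
    rw [hint]; simp [hv]
  have hsub : f y - f x - (inner ℝ (gradient f x) v : ℝ) =
      ∫ t in (0:ℝ)..1, ((inner ℝ (gradient f (x + t • v)) v : ℝ) - (inner ℝ (gradient f x) v : ℝ)) := by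
    rw [intervalIntegral.integral_sub (hcont.intervalIntegrable 0 1)
      (intervalIntegrable_const), ← h0]
    simp
  have hptwise : ∀ t ∈ Set.Icc (0:ℝ) 1,
      |(inner ℝ (gradient f (x + t • v)) v : ℝ) - (inner ℝ (gradient f x) v : ℝ)| ≤ L₁ * ‖v‖ ^ 2 * t := by
    intro t ht
    rw [← inner_sub_left]
    calc |(inner ℝ (gradient f (x + t • v) - gradient f x) v : ℝ)|
        ≤ ‖gradient f (x + t • v) - gradient f x‖ * ‖v‖ := abs_real_inner_le_norm _ _
      _ ≤ (L₁ * ‖x + t • v - x‖) * ‖v‖ := by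
          exact mul_le_mul_of_nonneg_right (hlip _ _) (norm_nonneg _)
      _ = L₁ * ‖v‖ ^ 2 * t := by
          rw [add_sub_cancel_left, norm_smul, Real.norm_eq_abs, abs_of_nonneg ht.1]; ring
  calc |f y - f x - (inner ℝ (gradient f x) v : ℝ)|
      = |∫ t in (0:ℝ)..1, ((inner ℝ (gradient f (x + t • v)) v : ℝ) - (inner ℝ (gradient f x) v : ℝ))| := by
        rw [hsub]
    _ ≤ ∫ t in (0:ℝ)..1, L₁ * ‖v‖ ^ 2 * t := by
        apply intervalIntegral.abs_integral_le_integral_abs (by norm_num) |>.trans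
        apply intervalIntegral.integral_mono_on (by norm_num)
          ((hcont.sub continuous_const).abs.intervalIntegrable 0 1)
          ((continuous_const.mul continuous_id).intervalIntegrable 0 1)
        exact hptwise
    _ = L₁ / 2 * ‖v‖ ^ 2 := by
        rw [intervalIntegral.integral_const_mul, integral_id]; ring

lemma condexp_coord_zero' {Ω : Type*} {m : MeasurableSpace Ω} [m0 : MeasurableSpace Ω]
    (hm : m ≤ m0) (μ : Measure Ω) [IsProbabilityMeasure μ] {n : ℕ}
    (Z : Ω → EuclideanSpace ℝ (Fin n)) (hZ : Integrable Z μ)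
    (hc : μ[Z|m] =ᵐ[μ] 0) (i : Fin n) :
    μ[fun x => Z x i | m] =ᵐ[μ] 0 := by
  have hfin : SigmaFinite (μ.trim hm) := by infer_instance
  have hZi : Integrable (fun x => Z x i) μ := by
    simpa using (EuclideanSpace.proj (𝕜 := ℝ) i).integrable_comp hZ
  refine (ae_eq_condExp_of_forall_setIntegral_eq hm hZi ?_ ?_ ?_).symm
  · intro s _ _; exact (integrable_zero _ _ _).integrableOn
  · intro s hs hμs
    have h1 : ∫ x in s, Z x ∂μ = 0 := by
      rw [← setIntegral_condExp hm hZ hs]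
      rw [setIntegral_congr_ae (hm s hs) (hc.mono fun x hx _ => hx)]
      simp
    have h2 : ∫ x in s, Z x i ∂μ = (∫ x in s, Z x ∂μ) i := by
      have := (EuclideanSpace.proj (𝕜 := ℝ) i).integral_comp_comm (hZ.integrableOn (s := s))
      simpa using this
    rw [h2, h1]; simp
  · exact StronglyMeasurable.aestronglyMeasurable (stronglyMeasurable_const (β := ℝ))

lemma integral_inner_condexp_zero' {Ω : Type*} {m : MeasurableSpace Ω} [m0 : MeasurableSpace Ω]
    (hm : m ≤ m0) (μ : Measure Ω) [IsProbabilityMeasure μ] {n : ℕ}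
    (f Z : Ω → EuclideanSpace ℝ (Fin n))
    (hfm : StronglyMeasurable[m] f)
    (hf2 : Integrable (fun x => ‖f x‖ ^ 2) μ)
    (hZ : Integrable Z μ)
    (hZ2 : Integrable (fun x => ‖Z x‖ ^ 2) μ)
    (hcond : μ[Z|m] =ᵐ[μ] 0) :
    ∫ x, (inner ℝ (f x) (Z x) : ℝ) ∂μ = 0 := by
  have hfin : SigmaFinite (μ.trim hm) := by infer_instance
  have hfsm : AEStronglyMeasurable f μ := (hfm.mono hm).aestronglyMeasurable
  have hint : ∀ i : Fin n, Integrable (fun x => f x i * Z x i) μ := by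
    intro i
    apply Integrable.mono' ((hf2.add hZ2).const_mul (1/2 : ℝ))
    · exact ((EuclideanSpace.proj (𝕜 := ℝ) i).continuous.comp_aestronglyMeasurable hfsm).mul
        ((EuclideanSpace.proj (𝕜 := ℝ) i).continuous.comp_aestronglyMeasurable hZ.1)
    · filter_upwards with x
      have h1 : |f x i| ≤ ‖f x‖ := abs_coord_le_norm' _ _
      have h2 : |Z x i| ≤ ‖Z x‖ := abs_coord_le_norm' _ _
      have h3 : |f x i * Z x i| ≤ ‖f x‖ * ‖Z x‖ := by
        rw [abs_mul]
        exact mul_le_mul h1 h2 (abs_nonneg _) (norm_nonneg _)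
      have h4 : ‖f x‖ * ‖Z x‖ ≤ (‖f x‖ ^ 2 + ‖Z x‖ ^ 2) / 2 := by nlinarith [sq_nonneg (‖f x‖ - ‖Z x‖)]
      calc ‖f x i * Z x i‖ = |f x i * Z x i| := rfl
        _ ≤ (‖f x‖ ^ 2 + ‖Z x‖ ^ 2) / 2 := h3.trans h4
        _ = 1/2 * (‖f x‖ ^ 2 + ‖Z x‖ ^ 2) := by ring
  have hcoord : ∀ i : Fin n, ∫ x, f x i * Z x i ∂μ = 0 := by
    intro i
    have hZi : Integrable (fun x => Z x i) μ := by
      simpa using (EuclideanSpace.proj (𝕜 := ℝ) i).integrable_comp hZ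
    have hfmi : StronglyMeasurable[m] (fun x => f x i) := by
      exact (EuclideanSpace.proj (𝕜 := ℝ) i).continuous.comp_stronglyMeasurable hfm
    have hmul := condExp_mul_of_stronglyMeasurable_left (μ := μ) hfmi
      (by simpa [Pi.mul_def] using hint i) hZi
    have hZi0 := condexp_coord_zero' hm μ Z hZ hcond i
    calc ∫ x, f x i * Z x i ∂μ = ∫ x, ((fun x => f x i) * (fun x => Z x i)) x ∂μ := by rfl
      _ = ∫ x, (μ[(fun x => f x i) * (fun x => Z x i)|m]) x ∂μ := (integral_condExp hm).symm
      _ = ∫ x, f x i * (μ[fun x => Z x i|m]) x ∂μ := integral_congr_ae (hmul.mono fun x hx => by simpa using hx)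
      _ = ∫ x, (0:ℝ) ∂μ := integral_congr_ae (hZi0.mono fun x hx => by simp [hx])
      _ = 0 := by simp
  have hrw : ∀ x, (inner ℝ (f x) (Z x) : ℝ) = ∑ i : Fin n, f x i * Z x i := by
    intro x
    simp [PiLp.inner_apply, RCLike.inner_apply, map_mul, mul_comm]
  calc ∫ x, (inner ℝ (f x) (Z x) : ℝ) ∂μ = ∫ x, ∑ i : Fin n, f x i * Z x i ∂μ :=
      integral_congr_ae (Filter.Eventually.of_forall fun x => hrw x)
    _ = ∑ i : Fin n, ∫ x, f x i * Z x i ∂μ := integral_finset_sum _ (fun i _ => hint i)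
    _ = 0 := by simp [hcoord]
/-- Theorem 1 (one-iteration deviation): for an arbitrary client of FedL2G,
after `E` local SGD steps on the total loss `θ ↦ L(θ, G)` (which is `L₁`-smooth,
with conditionally unbiased stochastic gradients of conditional variance at most
`σ²`) followed by the server update `G ↦ G − η_s π` (with `E[‖π‖] ≤ 2η_c²R'ER`,
and `G' ↦ L(θ, G')` 1-Lipschitz), one has
`E[L(θ^E, G − η_sπ)] ≤ L(θ⁰, G) + (L₁η_c²/2 − η_c)·Σ_{e<E} E[‖∇_θL(θ^e, G)‖²]
  + L₁Eη_c²σ²/2 + 2η_c²η_sR'ER`. -/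
theorem one_iteration_deviation
    (d M Esteps : ℕ) (hd : 0 < d) (hM : 0 < M) (hE : 0 < Esteps)
    (L₁ ηc ηs R R' σ : ℝ) (hL₁ : 0 < L₁) (hηc : 0 < ηc) (hηs : 0 < ηs)
    (hR : 0 < R) (hR' : 0 < R') (hσ : 0 ≤ σ)
    (L : EuclideanSpace ℝ (Fin d) → EuclideanSpace ℝ (Fin M) → ℝ)
    (G : EuclideanSpace ℝ (Fin M))
    -- (i) θ ↦ L(θ, G) is differentiable with L₁-Lipschitz gradient
    (hdiff : Differentiable ℝ (fun t => L t G))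
    (hlipgrad : ∀ x y : EuclideanSpace ℝ (Fin d),
      ‖gradient (fun t => L t G) x - gradient (fun t => L t G) y‖ ≤ L₁ * ‖x - y‖)
    -- (ii) G' ↦ L(θ, G') is 1-Lipschitz for every θ
    (hlipG : ∀ t : EuclideanSpace ℝ (Fin d), LipschitzWith 1 (L t))
    {Ω : Type*} [MeasurableSpace Ω] (μ : Measure Ω) [IsProbabilityMeasure μ]
    (θ0 : EuclideanSpace ℝ (Fin d))
    (θ w : ℕ → Ω → EuclideanSpace ℝ (Fin d))
    (hθ0 : θ 0 = fun _ => θ0)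
    (hθ : ∀ e < Esteps, ∀ x, θ (e + 1) x = θ e x - ηc • w e x)
    (hw_meas : ∀ e, Measurable (w e))
    (hw_int : ∀ e, Integrable (w e) μ)
    -- Assumption 1 (unbiased gradient)
    (hmean : ∀ e < Esteps,
      μ[w e | ⨆ j ∈ Finset.range (e + 1), MeasurableSpace.comap (θ j) inferInstance]
        =ᵐ[μ] fun x => gradient (fun t => L t G) (θ e x))
    (hvar_int : ∀ e < Esteps,
      Integrable (fun x => ‖w e x - gradient (fun t => L t G) (θ e x)‖ ^ 2) μ)
    -- Assumption 1 (bounded variance)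
    (hvar : ∀ e < Esteps, ∀ᵐ x ∂μ,
      (μ[(fun y => ‖w e y - gradient (fun t => L t G) (θ e y)‖ ^ 2) |
        ⨆ j ∈ Finset.range (e + 1), MeasurableSpace.comap (θ j) inferInstance]) x ≤ σ ^ 2)
    (hgrad_int : ∀ e < Esteps,
      Integrable (fun x => ‖gradient (fun t => L t G) (θ e x)‖ ^ 2) μ)
    -- Assumption 2: the aggregated guiding-vector gradient is bounded in expectation
    (π : Ω → EuclideanSpace ℝ (Fin M))
    (hπ_int : Integrable (fun x => ‖π x‖) μ)
    (hπ : ∫ x, ‖π x‖ ∂μ ≤ 2 * ηc ^ 2 * R' * Esteps * R)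
    (hL_int : Integrable (fun x => L (θ Esteps x) (G - ηs • π x)) μ)
    (hL_int' : Integrable (fun x => L (θ Esteps x) G) μ) :
    ∫ x, L (θ Esteps x) (G - ηs • π x) ∂μ ≤
      L θ0 G + (L₁ * ηc ^ 2 / 2 - ηc) *
        ∑ e ∈ Finset.range Esteps, ∫ x, ‖gradient (fun t => L t G) (θ e x)‖ ^ 2 ∂μ
      + L₁ * Esteps * ηc ^ 2 * σ ^ 2 / 2 + 2 * ηc ^ 2 * ηs * R' * Esteps * R := by
  classical
  -- abbreviation for the gradient map
  have hg_cont : Continuous (gradient (fun t => L t G)) := by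
    have hlw : LipschitzWith (Real.toNNReal L₁) (gradient (fun t => L t G)) := by
      apply LipschitzWith.of_dist_le_mul
      intro a b
      rw [dist_eq_norm, dist_eq_norm]
      simpa [Real.coe_toNNReal L₁ hL₁.le] using hlipgrad a b
    exact hlw.continuous
  -- measurability of the iterates
  have hθmeas : ∀ e, e ≤ Esteps → Measurable (θ e) := by
    intro e
    induction e with
    | zero => intro _; rw [hθ0]; exact measurable_const
    | succ e ih =>
      intro h
      have he : e < Esteps := Nat.lt_of_succ_le h
      have heq : θ (e + 1) = fun x => θ e x - ηc • w e x := funext (hθ e he)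
      rw [heq]
      exact (ih he.le).sub ((hw_meas e).const_smul ηc)
  -- integrability of ‖w e‖²
  have hw2_int : ∀ e < Esteps, Integrable (fun x => ‖w e x‖ ^ 2) μ := by
    intro e he
    apply Integrable.mono' (((hvar_int e he).const_mul 2).add ((hgrad_int e he).const_mul 2))
    · exact (((hw_meas e).norm.pow_const 2)).aestronglyMeasurable
    · filter_upwards with x
      have h1 : ‖w e x‖ ≤ ‖w e x - gradient (fun t => L t G) (θ e x)‖ +
          ‖gradient (fun t => L t G) (θ e x)‖ := by
        simpa using norm_add_le (w e x - gradient (fun t => L t G) (θ e x))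
          (gradient (fun t => L t G) (θ e x))
      have h2 : (0:ℝ) ≤ ‖w e x‖ := norm_nonneg _
      have h3 := pow_le_pow_left₀ h2 h1 2
      simp only [Pi.add_apply]
      rw [Real.norm_eq_abs, abs_of_nonneg (by positivity)]
      nlinarith [sq_nonneg (‖w e x - gradient (fun t => L t G) (θ e x)‖ -
        ‖gradient (fun t => L t G) (θ e x)‖), h3]
  -- integrability of the gradient process (vector valued)
  have hgθ_int : ∀ e < Esteps, Integrable (fun x => gradient (fun t => L t G) (θ e x)) μ := by
    intro e he
    apply Integrable.mono' (((integrable_const (1:ℝ)).add (hgrad_int e he)).const_mul (1/2))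
    · exact (hg_cont.measurable.comp (hθmeas e he.le)).aestronglyMeasurable
    · filter_upwards with x
      have h := norm_nonneg (gradient (fun t => L t G) (θ e x))
      simp only [Pi.add_apply]
      nlinarith [sq_nonneg (‖gradient (fun t => L t G) (θ e x)‖ - 1)]
  -- the iterates in closed form
  have hθsub : ∀ e, e ≤ Esteps → ∀ x, θ e x = θ0 - ηc • (∑ j ∈ Finset.range e, w j x) := by
    intro e
    induction e with
    | zero => intro _ x; simp [hθ0]
    | succ e ih =>
      intro h x
      have he : e < Esteps := Nat.lt_of_succ_le h
      rw [hθ e he x, ih he.le x, Finset.sum_range_succ, smul_add, sub_sub]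
  -- integrability of L (θ e ·) G
  have hLθ_int : ∀ e, e ≤ Esteps → Integrable (fun x => L (θ e x) G) μ := by
    intro e he
    have hwj_int : ∀ j ∈ Finset.range e, Integrable (fun x => ‖w j x‖) μ :=
      fun j _ => (hw_int j).norm
    have hwj2_int : ∀ j ∈ Finset.range e, Integrable (fun x => ‖w j x‖ ^ 2) μ :=
      fun j hj => hw2_int j (lt_of_lt_of_le (Finset.mem_range.mp hj) he)
    apply Integrable.mono'
      (g := fun x => |L θ0 G| +
        (‖gradient (fun t => L t G) θ0‖ * (ηc * ∑ j ∈ Finset.range e, ‖w j x‖) +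
          L₁ / 2 * (ηc ^ 2 * e * ∑ j ∈ Finset.range e, ‖w j x‖ ^ 2)))
    · exact (integrable_const _).add
        (((integrable_finset_sum _ hwj_int).const_mul ηc |>.const_mul _).add
          ((integrable_finset_sum _ hwj2_int).const_mul _ |>.const_mul _))
    · exact (hdiff.continuous.measurable.comp (hθmeas e he)).aestronglyMeasurable
    · filter_upwards with x
      have habs := smooth_taylor_bound' (fun t => L t G) L₁ hL₁.le hdiff hlipgrad θ0 (θ e x)
      have hnorm1 : ‖θ e x - θ0‖ ≤ ηc * ∑ j ∈ Finset.range e, ‖w j x‖ := by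
        rw [hθsub e he x]
        rw [sub_sub_cancel_left, norm_neg, norm_smul, Real.norm_eq_abs, abs_of_pos hηc]
        exact mul_le_mul_of_nonneg_left (norm_sum_le _ _) hηc.le
      have hnorm2 : ‖θ e x - θ0‖ ^ 2 ≤ ηc ^ 2 * e * ∑ j ∈ Finset.range e, ‖w j x‖ ^ 2 := by
        have h1 : (∑ j ∈ Finset.range e, ‖w j x‖) ^ 2 ≤
            e * ∑ j ∈ Finset.range e, ‖w j x‖ ^ 2 := by
          have := sq_sum_le_card_mul_sum_sq (s := Finset.range e)
            (f := fun j => ‖w j x‖)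
          simpa using this
        have h2 : ‖θ e x - θ0‖ ^ 2 ≤ (ηc * ∑ j ∈ Finset.range e, ‖w j x‖) ^ 2 := by
          apply sq_le_sq' _ hnorm1
          have : (0:ℝ) ≤ ηc * ∑ j ∈ Finset.range e, ‖w j x‖ := by positivity
          linarith [norm_nonneg (θ e x - θ0)]
        calc ‖θ e x - θ0‖ ^ 2 ≤ (ηc * ∑ j ∈ Finset.range e, ‖w j x‖) ^ 2 := h2
          _ = ηc ^ 2 * (∑ j ∈ Finset.range e, ‖w j x‖) ^ 2 := by ring
          _ ≤ ηc ^ 2 * (e * ∑ j ∈ Finset.range e, ‖w j x‖ ^ 2) := by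
              exact mul_le_mul_of_nonneg_left h1 (by positivity)
          _ = ηc ^ 2 * e * ∑ j ∈ Finset.range e, ‖w j x‖ ^ 2 := by ring
      have hip : |(inner ℝ (gradient (fun t => L t G) θ0) (θ e x - θ0) : ℝ)| ≤
          ‖gradient (fun t => L t G) θ0‖ * (ηc * ∑ j ∈ Finset.range e, ‖w j x‖) :=
        (abs_real_inner_le_norm _ _).trans
          (mul_le_mul_of_nonneg_left hnorm1 (norm_nonneg _))
      have hL2 : L₁ / 2 * ‖θ e x - θ0‖ ^ 2 ≤
          L₁ / 2 * (ηc ^ 2 * e * ∑ j ∈ Finset.range e, ‖w j x‖ ^ 2) :=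
        mul_le_mul_of_nonneg_left hnorm2 (by positivity)
      rw [Real.norm_eq_abs]
      have h1 := abs_le.mp habs
      have h2 := le_abs_self (L θ0 G)
      have h3 := neg_abs_le (L θ0 G)
      have h4 := le_abs_self ((inner ℝ (gradient (fun t => L t G) θ0) (θ e x - θ0)) : ℝ)
      have h5 := neg_abs_le ((inner ℝ (gradient (fun t => L t G) θ0) (θ e x - θ0)) : ℝ)
      have h6 := abs_le.mp hip
      rw [abs_le]
      constructor <;> linarith [h1.1, h1.2, hL2]
  -- integrability of the inner product term
  have hip_int : ∀ e < Esteps, Integrable (fun x =>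
      (inner ℝ (gradient (fun t => L t G) (θ e x)) (w e x - gradient (fun t => L t G) (θ e x)) : ℝ)) μ := by
    intro e he
    apply Integrable.mono' (((hgrad_int e he).add (hvar_int e he)).const_mul (1/2))
    · exact ((hg_cont.measurable.comp (hθmeas e he.le)).inner
        ((hw_meas e).sub (hg_cont.measurable.comp (hθmeas e he.le)))).aestronglyMeasurable
    · filter_upwards with x
      simp only [Pi.add_apply]
      rw [Real.norm_eq_abs]
      have h1 := abs_real_inner_le_norm (gradient (fun t => L t G) (θ e x))
        (w e x - gradient (fun t => L t G) (θ e x))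
      nlinarith [sq_nonneg (‖gradient (fun t => L t G) (θ e x)‖ -
        ‖w e x - gradient (fun t => L t G) (θ e x)‖)]
  -- one step of the descent inequality in expectation
  have hstep : ∀ e < Esteps, ∫ x, L (θ (e+1) x) G ∂μ ≤ ∫ x, L (θ e x) G ∂μ +
      (L₁ * ηc ^ 2 / 2 - ηc) * ∫ x, ‖gradient (fun t => L t G) (θ e x)‖ ^ 2 ∂μ +
      L₁ * ηc ^ 2 * σ ^ 2 / 2 := by
    intro e he
    have hm : (⨆ j ∈ Finset.range (e + 1), MeasurableSpace.comap (θ j) inferInstance) ≤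
        ‹MeasurableSpace Ω› := by
      refine iSup_le fun j => iSup_le fun hj => ?_
      exact measurable_iff_comap_le.mp
        (hθmeas j (le_of_lt (lt_of_lt_of_le (Finset.mem_range.mp hj) he)))
    have hθem : Measurable[⨆ j ∈ Finset.range (e + 1),
        MeasurableSpace.comap (θ j) inferInstance] (θ e) := by
      apply measurable_iff_comap_le.mpr
      exact le_biSup (fun j => MeasurableSpace.comap (θ j) inferInstance)
        (Finset.self_mem_range_succ e)
    have hfm : StronglyMeasurable[⨆ j ∈ Finset.range (e + 1), MeasurableSpace.comap (θ j) inferInstance] (fun x => gradient (fun t => L t G) (θ e x)) :=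
      (hg_cont.measurable.comp hθem).stronglyMeasurable
    have hZint : Integrable (fun x => w e x - gradient (fun t => L t G) (θ e x)) μ :=
      (hw_int e).sub (hgθ_int e he)
    have hZcond : μ[fun x => w e x - gradient (fun t => L t G) (θ e x)|⨆ j ∈ Finset.range (e + 1), MeasurableSpace.comap (θ j) inferInstance] =ᵐ[μ] 0 := by
      have h1 : μ[fun x => w e x - gradient (fun t => L t G) (θ e x)|⨆ j ∈ Finset.range (e + 1), MeasurableSpace.comap (θ j) inferInstance] =ᵐ[μ]
          μ[w e|⨆ j ∈ Finset.range (e + 1), MeasurableSpace.comap (θ j) inferInstance] -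
          μ[fun x => gradient (fun t => L t G) (θ e x)|⨆ j ∈ Finset.range (e + 1), MeasurableSpace.comap (θ j) inferInstance] :=
        condExp_sub (hw_int e) (hgθ_int e he) _
      have h2 : μ[fun x => gradient (fun t => L t G) (θ e x)|⨆ j ∈ Finset.range (e + 1), MeasurableSpace.comap (θ j) inferInstance] =
          fun x => gradient (fun t => L t G) (θ e x) :=
        condExp_of_stronglyMeasurable (μ := μ) hm hfm (hgθ_int e he)
      filter_upwards [h1, hmean e he] with x hx1 hx2
      have h3 := congrFun h2 x
      rw [hx1, Pi.sub_apply, hx2, h3]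
      simp
    have hinner0 : ∫ x, (inner ℝ (gradient (fun t => L t G) (θ e x))
        (w e x - gradient (fun t => L t G) (θ e x)) : ℝ) ∂μ = 0 :=
      integral_inner_condexp_zero' hm μ _ _ hfm (hgrad_int e he) hZint (hvar_int e he) hZcond
    have hvar_le : ∫ x, ‖w e x - gradient (fun t => L t G) (θ e x)‖ ^ 2 ∂μ ≤ σ ^ 2 := by
      haveI : SigmaFinite (μ.trim hm) := by infer_instance
      calc ∫ x, ‖w e x - gradient (fun t => L t G) (θ e x)‖ ^ 2 ∂μ
          = ∫ x, (μ[fun y => ‖w e y - gradient (fun t => L t G) (θ e y)‖ ^ 2|⨆ j ∈ Finset.range (e + 1), MeasurableSpace.comap (θ j) inferInstance]) x ∂μ :=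
            (integral_condExp hm).symm
        _ ≤ ∫ _, σ ^ 2 ∂μ := integral_mono_ae integrable_condExp (integrable_const _) (hvar e he)
        _ = σ ^ 2 := by simp
    have hpt : ∀ x, L (θ (e+1) x) G ≤ L (θ e x) G +
        (L₁ * ηc ^ 2 / 2 - ηc) * ‖gradient (fun t => L t G) (θ e x)‖ ^ 2 +
        (L₁ * ηc ^ 2 - ηc) * (inner ℝ (gradient (fun t => L t G) (θ e x))
          (w e x - gradient (fun t => L t G) (θ e x)) : ℝ) +
        L₁ * ηc ^ 2 / 2 * ‖w e x - gradient (fun t => L t G) (θ e x)‖ ^ 2 := by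
      intro x
      have habs := smooth_taylor_bound' (fun t => L t G) L₁ hL₁.le hdiff hlipgrad
        (θ e x) (θ (e+1) x)
      have hyx : θ (e+1) x - θ e x = -(ηc • w e x) := by
        rw [hθ e he x, sub_sub_cancel_left]
      have e1 : (inner ℝ (gradient (fun t => L t G) (θ e x)) (θ (e+1) x - θ e x) : ℝ) =
          -(ηc * ((inner ℝ (gradient (fun t => L t G) (θ e x))
            (w e x - gradient (fun t => L t G) (θ e x)) : ℝ) +
            ‖gradient (fun t => L t G) (θ e x)‖ ^ 2)) := by
        rw [hyx, inner_neg_right, real_inner_smul_right]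
        have h2 : (inner ℝ (gradient (fun t => L t G) (θ e x)) (w e x) : ℝ) =
            (inner ℝ (gradient (fun t => L t G) (θ e x))
              (w e x - gradient (fun t => L t G) (θ e x)) : ℝ) +
            ‖gradient (fun t => L t G) (θ e x)‖ ^ 2 := by
          rw [← real_inner_self_eq_norm_sq, ← inner_add_right]
          simp
        rw [h2]
      have e2 : ‖θ (e+1) x - θ e x‖ ^ 2 = ηc ^ 2 *
          (‖w e x - gradient (fun t => L t G) (θ e x)‖ ^ 2 +
           2 * (inner ℝ (gradient (fun t => L t G) (θ e x))
             (w e x - gradient (fun t => L t G) (θ e x)) : ℝ) +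
           ‖gradient (fun t => L t G) (θ e x)‖ ^ 2) := by
        have h4 : ‖w e x‖ ^ 2 =
            ‖w e x - gradient (fun t => L t G) (θ e x)‖ ^ 2 +
            2 * (inner ℝ (gradient (fun t => L t G) (θ e x))
              (w e x - gradient (fun t => L t G) (θ e x)) : ℝ) +
            ‖gradient (fun t => L t G) (θ e x)‖ ^ 2 := by
          have h5 := norm_add_sq_real (w e x - gradient (fun t => L t G) (θ e x))
            (gradient (fun t => L t G) (θ e x))
          rw [sub_add_cancel] at h5
          rw [h5, real_inner_comm]
        rw [hyx, norm_neg, norm_smul, Real.norm_eq_abs, mul_pow, sq_abs, h4]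
      have h5 := (abs_le.mp habs).2
      rw [e1, e2] at h5
      nlinarith [h5]
    have hRHS_int : Integrable (fun x => L (θ e x) G +
        (L₁ * ηc ^ 2 / 2 - ηc) * ‖gradient (fun t => L t G) (θ e x)‖ ^ 2 +
        (L₁ * ηc ^ 2 - ηc) * (inner ℝ (gradient (fun t => L t G) (θ e x))
          (w e x - gradient (fun t => L t G) (θ e x)) : ℝ) +
        L₁ * ηc ^ 2 / 2 * ‖w e x - gradient (fun t => L t G) (θ e x)‖ ^ 2) μ :=
      (((hLθ_int e he.le).add ((hgrad_int e he).const_mul _)).add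
        ((hip_int e he).const_mul _)).add ((hvar_int e he).const_mul _)
    calc ∫ x, L (θ (e+1) x) G ∂μ
        ≤ ∫ x, (L (θ e x) G +
            (L₁ * ηc ^ 2 / 2 - ηc) * ‖gradient (fun t => L t G) (θ e x)‖ ^ 2 +
            (L₁ * ηc ^ 2 - ηc) * (inner ℝ (gradient (fun t => L t G) (θ e x))
              (w e x - gradient (fun t => L t G) (θ e x)) : ℝ) +
            L₁ * ηc ^ 2 / 2 * ‖w e x - gradient (fun t => L t G) (θ e x)‖ ^ 2) ∂μ :=
          integral_mono (hLθ_int (e+1) (Nat.succ_le_of_lt he)) hRHS_int hpt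
      _ = ∫ x, L (θ e x) G ∂μ +
          (L₁ * ηc ^ 2 / 2 - ηc) * ∫ x, ‖gradient (fun t => L t G) (θ e x)‖ ^ 2 ∂μ +
          (L₁ * ηc ^ 2 - ηc) * ∫ x, (inner ℝ (gradient (fun t => L t G) (θ e x))
            (w e x - gradient (fun t => L t G) (θ e x)) : ℝ) ∂μ +
          L₁ * ηc ^ 2 / 2 * ∫ x, ‖w e x - gradient (fun t => L t G) (θ e x)‖ ^ 2 ∂μ := by
          have intA := hLθ_int e he.le
          have intB : Integrable (fun x => (L₁ * ηc ^ 2 / 2 - ηc) *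
              ‖gradient (fun t => L t G) (θ e x)‖ ^ 2) μ := (hgrad_int e he).const_mul _
          have intC : Integrable (fun x => (L₁ * ηc ^ 2 - ηc) *
              (inner ℝ (gradient (fun t => L t G) (θ e x))
                (w e x - gradient (fun t => L t G) (θ e x)) : ℝ)) μ :=
            (hip_int e he).const_mul _
          have intD : Integrable (fun x => L₁ * ηc ^ 2 / 2 *
              ‖w e x - gradient (fun t => L t G) (θ e x)‖ ^ 2) μ :=
            (hvar_int e he).const_mul _
          have intAB : Integrable (fun x => L (θ e x) G + (L₁ * ηc ^ 2 / 2 - ηc) *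
              ‖gradient (fun t => L t G) (θ e x)‖ ^ 2) μ := intA.add intB
          have intABC : Integrable (fun x => L (θ e x) G + (L₁ * ηc ^ 2 / 2 - ηc) *
              ‖gradient (fun t => L t G) (θ e x)‖ ^ 2 + (L₁ * ηc ^ 2 - ηc) *
              (inner ℝ (gradient (fun t => L t G) (θ e x))
                (w e x - gradient (fun t => L t G) (θ e x)) : ℝ)) μ := intAB.add intC
          rw [integral_add intABC intD, integral_add intAB intC, integral_add intA intB,
            integral_const_mul, integral_const_mul, integral_const_mul]
      _ ≤ ∫ x, L (θ e x) G ∂μ +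
          (L₁ * ηc ^ 2 / 2 - ηc) * ∫ x, ‖gradient (fun t => L t G) (θ e x)‖ ^ 2 ∂μ +
          L₁ * ηc ^ 2 * σ ^ 2 / 2 := by
          rw [hinner0, mul_zero, add_zero]
          have h6 : L₁ * ηc ^ 2 / 2 * ∫ x, ‖w e x - gradient (fun t => L t G) (θ e x)‖ ^ 2 ∂μ ≤
              L₁ * ηc ^ 2 / 2 * σ ^ 2 :=
            mul_le_mul_of_nonneg_left hvar_le (by positivity)
          linarith
  -- telescoping
  have hsum : ∀ k, k ≤ Esteps → ∫ x, L (θ k x) G ∂μ ≤ L θ0 G +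
      (L₁ * ηc ^ 2 / 2 - ηc) * ∑ e ∈ Finset.range k,
        ∫ x, ‖gradient (fun t => L t G) (θ e x)‖ ^ 2 ∂μ +
      k * (L₁ * ηc ^ 2 * σ ^ 2 / 2) := by
    intro k
    induction k with
    | zero => intro _; simp [hθ0]
    | succ k ih =>
      intro hk
      have hk' : k < Esteps := Nat.lt_of_succ_le hk
      have h1 := hstep k hk'
      have h2 := ih hk'.le
      rw [Finset.sum_range_succ]
      push_cast
      linarith
  -- server update : Lipschitz in the guiding vector
  have hfinal1 : ∫ x, L (θ Esteps x) (G - ηs • π x) ∂μ ≤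
      ∫ x, L (θ Esteps x) G ∂μ + ηs * ∫ x, ‖π x‖ ∂μ := by
    have hpt : ∀ x, L (θ Esteps x) (G - ηs • π x) ≤ L (θ Esteps x) G + ηs * ‖π x‖ := by
      intro x
      have h1 := (hlipG (θ Esteps x)).dist_le_mul (G - ηs • π x) G
      rw [Real.dist_eq] at h1
      have h2 : dist (G - ηs • π x) G = ηs * ‖π x‖ := by
        rw [dist_eq_norm]
        simp [norm_smul, abs_of_pos hηs]
      rw [h2] at h1
      have h3 := (abs_le.mp (by simpa using h1)).2
      linarith
    calc ∫ x, L (θ Esteps x) (G - ηs • π x) ∂μ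
        ≤ ∫ x, (L (θ Esteps x) G + ηs * ‖π x‖) ∂μ :=
          integral_mono hL_int (hL_int'.add (hπ_int.const_mul ηs)) hpt
      _ = ∫ x, L (θ Esteps x) G ∂μ + ηs * ∫ x, ‖π x‖ ∂μ := by
          have intP : Integrable (fun x => ηs * ‖π x‖) μ := hπ_int.const_mul ηs
          rw [integral_add hL_int' intP, integral_const_mul]
  have hπ' : ηs * ∫ x, ‖π x‖ ∂μ ≤ ηs * (2 * ηc ^ 2 * R' * Esteps * R) :=
    mul_le_mul_of_nonneg_left hπ hηs.le
  have hmain := hsum Esteps le_rfl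
  calc ∫ x, L (θ Esteps x) (G - ηs • π x) ∂μ
      ≤ ∫ x, L (θ Esteps x) G ∂μ + ηs * ∫ x, ‖π x‖ ∂μ := hfinal1
    _ ≤ (L θ0 G + (L₁ * ηc ^ 2 / 2 - ηc) * ∑ e ∈ Finset.range Esteps,
          ∫ x, ‖gradient (fun t => L t G) (θ e x)‖ ^ 2 ∂μ +
          Esteps * (L₁ * ηc ^ 2 * σ ^ 2 / 2)) + ηs * (2 * ηc ^ 2 * R' * Esteps * R) :=
        add_le_add hmain hπ'
    _ = L θ0 G + (L₁ * ηc ^ 2 / 2 - ηc) * ∑ e ∈ Finset.range Esteps,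
          ∫ x, ‖gradient (fun t => L t G) (θ e x)‖ ^ 2 ∂μ
        + L₁ * Esteps * ηc ^ 2 * σ ^ 2 / 2 + 2 * ηc ^ 2 * ηs * R' * Esteps * R := by
        push_cast
        ring
end

section
/- Let T, E be positive integers, L₁ > 0, σ ≥ 0, η_s, R, R' ≥ 0, ε > 0, and suppose 0 < η_c < 2ε / (L₁(Eσ² + ε) + 4η_s R' E R). Let L* ∈ ℝ, let (a_t)_{t=0}^{T} be real numbers with a_t ≥ L* for all t, and let g_{t,e} ≥ 0 for 0 ≤ t ≤ T−1 and 0 ≤ e ≤ E−1 satisfy, for every t, a_{t+1} ≤ a_t + (L₁η_c²/2 − η_c) · Σ_{e=0}^{E−1} g_{t,e} + L₁ E η_c² σ² / 2 + 2 η_c² η_s R' E R. If moreover T > 2Δ / (ε η_c (2 − L₁η_c) − η_c² (L₁ E σ² + 4 η_s R' E R)) where Δ = a_0 − L*, then (1/T) · Σ_{t=0}^{T−1} Σ_{e=0}^{E−1} g_{t,e} < ε. -/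
/-- Theorem 2, ε-accuracy statement: under the per-iteration deviation
inequality of Theorem 1, if the client learning rate satisfies
`0 < η_c < 2ε/(L₁(Eσ² + ε) + 4η_sR'ER)` and the number of communication
iterations satisfies `T > 2Δ/(εη_c(2 − L₁η_c) − η_c²(L₁Eσ² + 4η_sR'ER))` with
`Δ = a 0 − L*`, then the time average of the expected squared gradient norms
`g t e` is strictly below `ε`. -/
theorem fedl2g_epsilon_accuracy
    (T Esteps : ℕ) (hT : 0 < T) (hE : 0 < Esteps)
    (L₁ σ ηs R R' ε ηc : ℝ) (hL₁ : 0 < L₁) (hσ : 0 ≤ σ)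
    (hηs : 0 ≤ ηs) (hR : 0 ≤ R) (hR' : 0 ≤ R') (hε : 0 < ε)
    (hηc0 : 0 < ηc)
    (hηc : ηc < 2 * ε / (L₁ * (Esteps * σ ^ 2 + ε) + 4 * ηs * R' * Esteps * R))
    (Lstar : ℝ) (a : ℕ → ℝ) (g : ℕ → ℕ → ℝ)
    (ha : ∀ t ≤ T, Lstar ≤ a t)
    (hg : ∀ t < T, ∀ e < Esteps, 0 ≤ g t e)
    (hrec : ∀ t < T, a (t + 1) ≤ a t
      + (L₁ * ηc ^ 2 / 2 - ηc) * ∑ e ∈ Finset.range Esteps, g t e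
      + L₁ * Esteps * ηc ^ 2 * σ ^ 2 / 2 + 2 * ηc ^ 2 * ηs * R' * Esteps * R)
    (hT' : (T : ℝ) > 2 * (a 0 - Lstar) /
      (ε * ηc * (2 - L₁ * ηc) - ηc ^ 2 * (L₁ * Esteps * σ ^ 2 + 4 * ηs * R' * Esteps * R))) :
    (1 / (T : ℝ)) * ∑ t ∈ Finset.range T, ∑ e ∈ Finset.range Esteps, g t e < ε := by
  have hEσ : (0:ℝ) ≤ (Esteps : ℝ) * σ ^ 2 := by positivity
  have hRR : (0:ℝ) ≤ 4 * ηs * R' * Esteps * R := by positivity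
  have hden : 0 < L₁ * (Esteps * σ ^ 2 + ε) + 4 * ηs * R' * Esteps * R := by nlinarith
  have hηc' : ηc * (L₁ * (Esteps * σ ^ 2 + ε) + 4 * ηs * R' * Esteps * R) < 2 * ε := by
    rw [div_eq_mul_inv] at hηc
    calc ηc * (L₁ * (Esteps * σ ^ 2 + ε) + 4 * ηs * R' * Esteps * R)
        < (2 * ε * (L₁ * (Esteps * σ ^ 2 + ε) + 4 * ηs * R' * Esteps * R)⁻¹) *
          (L₁ * (Esteps * σ ^ 2 + ε) + 4 * ηs * R' * Esteps * R) := by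
          exact mul_lt_mul_of_pos_right hηc hden
      _ = 2 * ε := by field_simp
  -- key constants
  obtain ⟨K, hK⟩ : ∃ K : ℝ, K = L₁ * Esteps * ηc ^ 2 * σ ^ 2 / 2 + 2 * ηc ^ 2 * ηs * R' * Esteps * R := ⟨_, rfl⟩
  obtain ⟨c, hc⟩ : ∃ c : ℝ, c = ηc - L₁ * ηc ^ 2 / 2 := ⟨_, rfl⟩
  have hD : 0 < ε * ηc * (2 - L₁ * ηc) - ηc ^ 2 * (L₁ * Esteps * σ ^ 2 + 4 * ηs * R' * Esteps * R) := by
    nlinarith [sq_nonneg ηc]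
  have hc0 : 0 < c := by
    have : L₁ * ηc * ε ≤ ηc * (L₁ * (Esteps * σ ^ 2 + ε) + 4 * ηs * R' * Esteps * R) := by
      nlinarith [mul_nonneg (mul_nonneg hL₁.le hηc0.le) hEσ, mul_nonneg hηc0.le hRR]
    have h2 : L₁ * ηc < 2 := by nlinarith
    rw [hc]; nlinarith
  -- sum the recurrence
  obtain ⟨S, hS⟩ : ∃ S : ℝ, S = ∑ t ∈ Finset.range T, ∑ e ∈ Finset.range Esteps, g t e := ⟨_, rfl⟩
  have hsum : a T - a 0 ≤ -c * S + T * K := by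
    have h1 : a T - a 0 = ∑ t ∈ Finset.range T, (a (t+1) - a t) :=
      (Finset.sum_range_sub a T).symm
    rw [h1]
    have h2 : ∑ t ∈ Finset.range T, (a (t+1) - a t)
        ≤ ∑ t ∈ Finset.range T, (-c * (∑ e ∈ Finset.range Esteps, g t e) + K) := by
      apply Finset.sum_le_sum
      intro t ht
      rw [Finset.mem_range] at ht
      have := hrec t ht
      rw [hc, hK]; linarith
    calc ∑ t ∈ Finset.range T, (a (t+1) - a t)
        ≤ ∑ t ∈ Finset.range T, (-c * (∑ e ∈ Finset.range Esteps, g t e) + K) := h2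
      _ = -c * S + T * K := by
          rw [Finset.sum_add_distrib, ← Finset.mul_sum, Finset.sum_const, Finset.card_range,
            nsmul_eq_mul, ← hS]
  have haT : Lstar ≤ a T := ha T le_rfl
  have hcS : c * S ≤ (a 0 - Lstar) + T * K := by linarith
  have hTpos : (0:ℝ) < T := by exact_mod_cast hT
  -- from hT' : T > 2Δ/D with D > 0, get T*D > 2Δ
  have hTD : (T:ℝ) * (ε * ηc * (2 - L₁ * ηc) - ηc ^ 2 * (L₁ * Esteps * σ ^ 2 + 4 * ηs * R' * Esteps * R))
      > 2 * (a 0 - Lstar) := by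
    rw [gt_iff_lt, div_lt_iff₀ hD] at hT'
    linarith
  -- D = 2*(c*ε - K)
  have hDeq : ε * ηc * (2 - L₁ * ηc) - ηc ^ 2 * (L₁ * Esteps * σ ^ 2 + 4 * ηs * R' * Esteps * R)
      = 2 * (c * ε - K) := by rw [hc, hK]; ring
  have hSlt : S < T * ε := by
    have : (T:ℝ) * (c * ε - K) > a 0 - Lstar := by
      rw [hDeq] at hTD; linarith
    have h3 : (T:ℝ) * (c * ε - K) = T * c * ε - T * K := by ring
    have hcS' : c * S < T * c * ε := by linarith
    have heq : (T:ℝ) * c * ε = c * (T * ε) := by ring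
    have hcs2 : c * S < c * ((T:ℝ) * ε) := by linarith
    exact lt_of_mul_lt_mul_left hcs2 hc0.le
  rw [one_div, ← hS]
  calc (T:ℝ)⁻¹ * S < (T:ℝ)⁻¹ * (T * ε) := by
        exact mul_lt_mul_of_pos_left hSlt (inv_pos.mpr hTpos)
    _ = ε := by field_simp
end

section
/- Let d, M be positive integers, η > 0, and θ ∈ ℝ^d. Let f : ℝ^d → ℝ^M be differentiable at θ, A : ℝ^d → ℝ differentiable at θ, and for v ∈ ℝ^M define the pseudo-trained parameters T(v) = θ − η∇A(θ) − (2η/M) · (Df(θ))*(f(θ) − v) ∈ ℝ^d, where Df(θ) : ℝ^d → ℝ^M is the derivative (Jacobian) of f at θ and (Df(θ))* its adjoint (transpose); equivalently, T(v) = θ − η∇_θ[A(θ) + (1/M)‖f(θ) − v‖₂²]. Let c : ℝ^M → ℝ and fix v ∈ ℝ^M such that f is differentiable at T(v) and c is differentiable at f(T(v)), and define φ(v) = c(f(T(v))). Then φ is differentiable at v with gradient ∇φ(v) = (2η/M) · Df(θ)[∇(c∘f)(T(v))]. In particular, computing ∇φ(v) requires only first-order derivatives of f (no Hessian of f appears).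 -/
open ContinuousLinearMap

/-- Efficiency analysis (Section 3.3, Equation (4)): with the pseudo-trained
parameters `T(v) = θ − η∇A(θ) − (2η/M)·(Df(θ))*(f(θ) − v)`, the quiz-set loss
`φ(v) = c(f(T(v)))` is differentiable at `v` with gradient
`∇φ(v) = (2η/M)·Df(θ)[∇(c∘f)(T(v))]`, which involves only first-order
derivatives of `f`. -/
theorem guiding_vector_gradient_first_order
    (d M : ℕ) (hd : 0 < d) (hM : 0 < M) (η : ℝ) (hη : 0 < η)
    (θ : EuclideanSpace ℝ (Fin d))
    (f : EuclideanSpace ℝ (Fin d) → EuclideanSpace ℝ (Fin M))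
    (A : EuclideanSpace ℝ (Fin d) → ℝ)
    (hf : DifferentiableAt ℝ f θ) (hA : DifferentiableAt ℝ A θ)
    (c : EuclideanSpace ℝ (Fin M) → ℝ)
    (T : EuclideanSpace ℝ (Fin M) → EuclideanSpace ℝ (Fin d))
    (hT : ∀ v, T v = θ - η • gradient A θ -
      (2 * η / (M : ℝ)) • (ContinuousLinearMap.adjoint (fderiv ℝ f θ)) (f θ - v))
    (v : EuclideanSpace ℝ (Fin M))
    (hfv : DifferentiableAt ℝ f (T v))
    (hcv : DifferentiableAt ℝ c (f (T v))) :
    HasGradientAt (fun u => c (f (T u)))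
      ((2 * η / (M : ℝ)) • (fderiv ℝ f θ) (gradient (c ∘ f) (T v))) v := by
  set L : EuclideanSpace ℝ (Fin M) →L[ℝ] EuclideanSpace ℝ (Fin d) :=
    (2 * η / (M : ℝ)) • ContinuousLinearMap.adjoint (fderiv ℝ f θ) with hL
  have hTlin : HasFDerivAt T L v := by
    have heq : T = fun u =>
        (θ - η • gradient A θ -
          (2 * η / (M : ℝ)) • (ContinuousLinearMap.adjoint (fderiv ℝ f θ)) (f θ)) + L u := by
      funext u
      rw [hT u]
      simp [hL, map_sub, smul_sub]
      abel
    rw [heq]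
    exact (L.hasFDerivAt).const_add _
  have hcf : DifferentiableAt ℝ (c ∘ f) (T v) := hcv.comp _ hfv
  have hg : HasGradientAt (c ∘ f) (gradient (c ∘ f) (T v)) (T v) := hcf.hasGradientAt
  have hcomp : HasFDerivAt (fun u => c (f (T u)))
      ((InnerProductSpace.toDual ℝ _ (gradient (c ∘ f) (T v))).comp L) v :=
    (hg.hasFDerivAt.comp v hTlin : )
  rw [hasGradientAt_iff_hasFDerivAt]
  convert hcomp using 1
  rotate_right
  ext h
  simp only [InnerProductSpace.toDual_apply_apply, ContinuousLinearMap.coe_comp',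
    Function.comp_apply, hL, ContinuousLinearMap.coe_smul', Pi.smul_apply,
    inner_smul_left, real_inner_smul_right]
  rw [ContinuousLinearMap.adjoint_inner_right, real_inner_comm]
  simp
  all_goals rfl
end
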